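/- arXiv:2602.06162 — 3 statements merged into one kernel-verified Lean document; each statement's English description precedes it below -/
import Mathlib

section
/- Every finite subgroup of $\mathrm{GL}_2(\mathbb{Q})$ has order at most $12$. -/
open Matrix

private lemma order_le_six_aux (z : ℂˣ) (t : ℚ) (hpos : 0 < orderOf z)
    (hquad : (z:ℂ)^2 - (t:ℂ)*(z:ℂ) + 1 = 0) (ht : |t| ≤ 2) : orderOf z ≤ 6 := by
  set zc : ℂ := (z : ℂ) with hzc
  have hz0 : zc ≠ 0 := z.ne_zero
  have hn : zc ^ (orderOf z) = 1 := by
    have := pow_orderOf_eq_one z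
    calc zc ^ orderOf z = ((z ^ orderOf z : ℂˣ) : ℂ) := by push_cast; rfl
    _ = 1 := by rw [this]; rfl
  have hint : IsIntegral ℤ zc := by
    refine ⟨Polynomial.X ^ (orderOf z) - Polynomial.C 1, Polynomial.monic_X_pow_sub_C 1 hpos.ne', ?_⟩
    simp [Polynomial.eval₂_sub, hn]
  have hinv : IsIntegral ℤ zc⁻¹ := by
    refine ⟨Polynomial.X ^ (orderOf z) - Polynomial.C 1, Polynomial.monic_X_pow_sub_C 1 hpos.ne', ?_⟩
    simp [Polynomial.eval₂_sub, inv_pow, hn]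
  have hzinv : zc⁻¹ = (t:ℂ) - zc := by
    have h1 : zc * ((t:ℂ) - zc) = 1 := by linear_combination -hquad
    exact (eq_inv_of_mul_eq_one_right h1).symm
  have htint : IsIntegral ℤ ((t:ℚ):ℂ) := by
    have : ((t:ℚ):ℂ) = zc + zc⁻¹ := by rw [hzinv]; ring
    rw [this]; exact hint.add hinv
  have htq : IsIntegral ℤ t := by
    rwa [show ((t:ℚ):ℂ) = algebraMap ℚ ℂ t by simp,
      isIntegral_algebraMap_iff (algebraMap ℚ ℂ).injective] at htint
  obtain ⟨m, hm⟩ := IsIntegrallyClosed.isIntegral_iff.mp htq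
  have hmt : (m : ℚ) = t := by exact_mod_cast hm
  have hmabs : |m| ≤ 2 := by
    have : |(m:ℚ)| ≤ 2 := by rw [hmt]; exact ht
    exact_mod_cast this
  obtain ⟨h1, h2⟩ := abs_le.mp hmabs
  have hq : zc^2 - (m:ℂ)*zc + 1 = 0 := by
    rw [← hmt] at hquad; push_cast at hquad ⊢; linear_combination hquad
  have key : ∃ k, 0 < k ∧ k ≤ 6 ∧ zc ^ k = 1 := by
    interval_cases m <;> push_cast at hq
    · refine ⟨2, by norm_num, by norm_num, ?_⟩
      have hsq : (zc + 1)^2 = 0 := by linear_combination hq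
      have : zc = -1 := by
        have := pow_eq_zero_iff (n := 2) (by norm_num) |>.mp hsq
        linear_combination this
      rw [this]; ring
    · exact ⟨3, by norm_num, by norm_num, by linear_combination (zc - 1) * hq⟩
    · exact ⟨4, by norm_num, by norm_num, by linear_combination (zc^2 - 1) * hq⟩
    · exact ⟨6, by norm_num, by norm_num, by linear_combination (zc^4 + zc^3 - zc - 1) * hq⟩
    · refine ⟨1, by norm_num, by norm_num, ?_⟩
      have hsq : (zc - 1)^2 = 0 := by linear_combination hq
      have : zc = 1 := by
        have := pow_eq_zero_iff (n := 2) (by norm_num) |>.mp hsq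
        linear_combination this
      rw [this]; ring
  obtain ⟨k, hk0, hk6, hk⟩ := key
  have : z ^ k = 1 := Units.ext (by push_cast; simpa using hk)
  exact le_trans (Nat.le_of_dvd hk0 (orderOf_dvd_of_pow_eq_one this)) hk6

set_option maxHeartbeats 1000000 in
/-- Every finite subgroup of `GL₂(ℚ)` has order at most `12`. -/
theorem card_finite_subgroup_GL2_rat_le (G : Subgroup (GL (Fin 2) ℚ)) [Finite G] :
    Nat.card G ≤ 12 := by
  classical
  have : Fintype G := Fintype.ofFinite G
  set f : G →* ℚˣ := (Matrix.GeneralLinearGroup.det).comp G.subtype with hf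
  have hker : Nat.card f.ker ≤ 6 := by
    -- the averaged positive definite bilinear form
    set Mg : G → Matrix (Fin 2) (Fin 2) ℚ :=
      fun g => ((g : GL (Fin 2) ℚ) : Matrix (Fin 2) (Fin 2) ℚ) with hMg
    set A : Matrix (Fin 2) (Fin 2) ℚ := ∑ g : G, (Mg g)ᵀ * Mg g with hA
    have hMgmul : ∀ g h : G, Mg (g * h) = Mg g * Mg h := fun g h => rfl
    have hinv : ∀ h : G, (Mg h)ᵀ * A * Mg h = A := by
      intro h
      rw [hA, Finset.mul_sum, Finset.sum_mul]
      exact Fintype.sum_equiv (Equiv.mulRight h) _ _ (fun g => by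
        show (Mg h)ᵀ * ((Mg g)ᵀ * Mg g) * Mg h = (Mg (g * h))ᵀ * Mg (g * h)
        rw [hMgmul, Matrix.transpose_mul]
        noncomm_ring)
    have hentry : ∀ i j, A i j = ∑ g : G, (Mg g 0 i * Mg g 0 j + Mg g 1 i * Mg g 1 j) := by
      intro i j
      rw [hA, Matrix.sum_apply]
      exact Finset.sum_congr rfl (fun g _ => by
        simp [Matrix.mul_apply, Fin.sum_univ_two])
    have hsym : A 1 0 = A 0 1 := by
      rw [hentry, hentry]
      exact Finset.sum_congr rfl (fun g _ => by ring)
    have hquadsum : ∀ v0 v1 : ℚ, A 0 0 * v0^2 + 2 * A 0 1 * v0 * v1 + A 1 1 * v1^2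
        = ∑ g : G, ((Mg g 0 0 * v0 + Mg g 0 1 * v1)^2 + (Mg g 1 0 * v0 + Mg g 1 1 * v1)^2) := by
      intro v0 v1
      rw [hentry 0 0, hentry 0 1, hentry 1 1]
      simp only [Finset.sum_mul, Finset.mul_sum]
      rw [← Finset.sum_add_distrib, ← Finset.sum_add_distrib]
      exact Finset.sum_congr rfl (fun g _ => by ring)
    have hquadpos : ∀ v0 v1 : ℚ, ¬(v0 = 0 ∧ v1 = 0) →
        0 < A 0 0 * v0^2 + 2 * A 0 1 * v0 * v1 + A 1 1 * v1^2 := by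
      intro v0 v1 hv
      rw [hquadsum]
      apply Finset.sum_pos' (fun g _ => by positivity)
      refine ⟨1, Finset.mem_univ 1, ?_⟩
      have h1 : Mg 1 = 1 := rfl
      rw [h1]
      simp only [Matrix.one_apply_eq, Matrix.one_apply_ne, ne_eq]
      norm_num
      rcases not_and_or.mp hv with h | h
      · nlinarith [sq_nonneg v0, sq_nonneg v1, pow_pos (abs_pos.mpr h) 2, sq_abs v0]
      · nlinarith [sq_nonneg v0, sq_nonneg v1, pow_pos (abs_pos.mpr h) 2, sq_abs v1]
    have hapos : 0 < A 0 0 := by have := hquadpos 1 0 (by norm_num); linarith [this]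
    have hcpos : 0 < A 1 1 := by have := hquadpos 0 1 (by norm_num); linarith [this]
    have hDpos : 0 < A 0 0 * A 1 1 - A 0 1 ^ 2 := by
      have := hquadpos (-(A 0 1)) (A 0 0) (by rintro ⟨-, h⟩; exact hapos.ne' h)
      nlinarith [this, hapos]
    -- relations for determinant-one elements
    have hrel : ∀ h : G, (Mg h).det = 1 →
        (Mg h 0 1 * A 0 0 + Mg h 1 0 * A 1 1 = 0 ∧
         A 1 1 * (Mg h 0 0 - Mg h 1 1) = 2 * A 0 1 * Mg h 0 1) := by
      intro h hdet
      have hd : Mg h 0 0 * Mg h 1 1 - Mg h 0 1 * Mg h 1 0 = 1 := by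
        rw [← Matrix.det_fin_two]; exact hdet
      have hN' : Mg h * !![Mg h 1 1, -(Mg h 0 1); -(Mg h 1 0), Mg h 0 0] = 1 := by
        ext i j
        fin_cases i <;> fin_cases j <;>
          simp [Matrix.mul_apply, Fin.sum_univ_two, Matrix.one_apply] <;> linarith [hd]
      have key : (Mg h)ᵀ * A = A * !![Mg h 1 1, -(Mg h 0 1); -(Mg h 1 0), Mg h 0 0] := by
        calc (Mg h)ᵀ * A
            = (Mg h)ᵀ * A * (Mg h * !![Mg h 1 1, -(Mg h 0 1); -(Mg h 1 0), Mg h 0 0]) := by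
              rw [hN', Matrix.mul_one]
        _ = ((Mg h)ᵀ * A * Mg h) * !![Mg h 1 1, -(Mg h 0 1); -(Mg h 1 0), Mg h 0 0] := by
              rw [Matrix.mul_assoc ((Mg h)ᵀ * A)]
        _ = A * !![Mg h 1 1, -(Mg h 0 1); -(Mg h 1 0), Mg h 0 0] := by rw [hinv h]
      have e01 := congrFun (congrFun key 0) 1
      have e11 := congrFun (congrFun key 1) 1
      simp [Matrix.mul_apply, Fin.sum_univ_two] at e01 e11
      rw [hsym] at e11
      constructor <;> [linarith [e01]; linarith [e11]]
    -- the kernel of the determinant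
    have hdet1 : ∀ h : f.ker, (Mg (h : G)).det = 1 := by
      intro h
      have h2 : f (h : G) = 1 := h.2
      have h3 : (Matrix.GeneralLinearGroup.det ((h : G) : GL (Fin 2) ℚ)) = 1 := h2
      have h4 := congrArg Units.val h3
      rwa [Matrix.GeneralLinearGroup.val_det_apply, Units.val_one] at h4
    set p : f.ker → ℚ := fun h => (Mg (h : G) 0 0 + Mg (h : G) 1 1) / 2 with hp
    set q : f.ker → ℚ := fun h => Mg (h : G) 0 1 / A 1 1 with hq
    have hc0 : A 1 1 ≠ 0 := hcpos.ne'
    have rep : ∀ h : f.ker, Mg (h : G) 0 0 = p h + q h * A 0 1 ∧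
        Mg (h : G) 0 1 = q h * A 1 1 ∧
        Mg (h : G) 1 0 = -(q h * A 0 0) ∧ Mg (h : G) 1 1 = p h - q h * A 0 1 := by
      intro h
      obtain ⟨R1, R2⟩ := hrel (h : G) (hdet1 h)
      refine ⟨?_, ?_, ?_, ?_⟩
      · simp only [hp, hq]; field_simp; linarith [R2]
      · simp only [hq]; field_simp
      · simp only [hq]; field_simp; linarith [R1]
      · simp only [hp, hq]; field_simp; linarith [R2]
    have hnorm : ∀ h : f.ker, p h ^ 2 + q h ^ 2 * (A 0 0 * A 1 1 - A 0 1 ^ 2) = 1 := by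
      intro h
      have hd := hdet1 h
      rw [Matrix.det_fin_two, (rep h).1, (rep h).2.1, (rep h).2.2.1, (rep h).2.2.2] at hd
      linear_combination hd
    -- the embedding into ℂ
    set δ : ℝ := Real.sqrt ((A 0 0 * A 1 1 - A 0 1 ^ 2 : ℚ) : ℝ) with hδ
    have hδ2 : (δ : ℂ)^2 = ((A 0 0 * A 1 1 - A 0 1 ^ 2 : ℚ) : ℂ) := by
      have h1 : δ ^ 2 = ((A 0 0 * A 1 1 - A 0 1 ^ 2 : ℚ) : ℝ) :=
        Real.sq_sqrt (by exact_mod_cast hDpos.le)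
      calc (δ : ℂ)^2 = ((δ ^ 2 : ℝ) : ℂ) := by push_cast; ring
      _ = ((A 0 0 * A 1 1 - A 0 1 ^ 2 : ℚ) : ℂ) := by rw [h1]; norm_cast
    have hδ2' : (δ : ℂ)^2 = ((A 0 0 : ℚ) : ℂ) * ((A 1 1 : ℚ) : ℂ) - ((A 0 1 : ℚ) : ℂ)^2 := by
      rw [hδ2]; push_cast; ring
    have hδ0 : δ ≠ 0 := by
      refine (Real.sqrt_pos.mpr ?_).ne'
      exact_mod_cast hDpos
    have hψmul : ∀ x y : f.ker,
        (((p (x*y) : ℚ) : ℂ) + ((q (x*y) : ℚ) : ℂ) * (δ : ℂ) * Complex.I)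
        = (((p x : ℚ) : ℂ) + ((q x : ℚ) : ℂ) * (δ : ℂ) * Complex.I)
          * (((p y : ℚ) : ℂ) + ((q y : ℚ) : ℂ) * (δ : ℂ) * Complex.I) := by
      intro x y
      have hm : Mg ((x * y : f.ker) : G) = Mg (x : G) * Mg (y : G) := rfl
      have e00 : Mg ((x*y : f.ker) : G) 0 0
          = p x * p y - q x * q y * (A 0 0 * A 1 1 - A 0 1 ^ 2) + (p x * q y + q x * p y) * A 0 1 := by
        rw [hm, Matrix.mul_apply, Fin.sum_univ_two,
          (rep x).1, (rep x).2.1, (rep y).1, (rep y).2.2.1]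
        ring
      have e11 : Mg ((x*y : f.ker) : G) 1 1
          = p x * p y - q x * q y * (A 0 0 * A 1 1 - A 0 1 ^ 2) - (p x * q y + q x * p y) * A 0 1 := by
        rw [hm, Matrix.mul_apply, Fin.sum_univ_two,
          (rep x).2.2.1, (rep x).2.2.2, (rep y).2.1, (rep y).2.2.2]
        ring
      have e01 : Mg ((x*y : f.ker) : G) 0 1 = (p x * q y + q x * p y) * A 1 1 := by
        rw [hm, Matrix.mul_apply, Fin.sum_univ_two,
          (rep x).1, (rep x).2.1, (rep y).2.1, (rep y).2.2.2]
        ring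
      have hpmul : p (x*y) = p x * p y - q x * q y * (A 0 0 * A 1 1 - A 0 1 ^ 2) := by
        simp only [hp]
        rw [e00, e11]
        ring
      have hqmul : q (x*y) = p x * q y + q x * p y := by
        simp only [hq]
        rw [e01]
        field_simp
        rw [(rep x).2.1, (rep y).2.1]
        ring
      rw [hpmul, hqmul]
      push_cast
      linear_combination (-(q x : ℂ) * (q y : ℂ) * Complex.I^2) * hδ2'
        + (-(q x : ℂ) * (q y : ℂ) * (((A 0 0 : ℚ) : ℂ) * ((A 1 1 : ℚ) : ℂ) - ((A 0 1 : ℚ) : ℂ)^2)) * Complex.I_sq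
    have hMgone' : Mg ((1 : f.ker) : G) = 1 := rfl
    have hp1' : p (1 : f.ker) = 1 := by
      simp only [hp]; rw [hMgone']; norm_num [Matrix.one_apply]
    have hq1' : q (1 : f.ker) = 0 := by
      simp only [hq]; rw [hMgone']; norm_num [Matrix.one_apply]
    set ψ : f.ker →* ℂ :=
      { toFun := fun h => ((p h : ℚ) : ℂ) + ((q h : ℚ) : ℂ) * (δ : ℂ) * Complex.I,
        map_one' := by
          show ((p (1 : f.ker) : ℚ) : ℂ) + ((q (1 : f.ker) : ℚ) : ℂ) * (δ : ℂ) * Complex.I = 1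
          rw [hp1', hq1']; norm_num,
        map_mul' := hψmul } with hψ
    have hψapp : ∀ h : f.ker, ψ h = ((p h : ℚ) : ℂ) + ((q h : ℚ) : ℂ) * (δ : ℂ) * Complex.I :=
      fun h => rfl
    have hinj : Function.Injective ψ := by
      rw [injective_iff_map_eq_one]
      intro h hh
      rw [hψapp] at hh
      have hre := congrArg Complex.re hh
      have him := congrArg Complex.im hh
      simp [Complex.add_re, Complex.add_im, Complex.mul_re, Complex.mul_im] at hre him
      have hq0 : q h = 0 := by
        rcases him with h' | h'
        · exact_mod_cast h'
        · exact absurd h' hδ0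
      have hp1 : p h = 1 := by exact_mod_cast hre
      have hMg1 : Mg (h : G) = 1 := by
        have r := rep h
        rw [Matrix.eta_fin_two (Mg (h : G)), r.1, r.2.1, r.2.2.1, r.2.2.2, hp1, hq0,
          Matrix.one_fin_two]
        norm_num
      have h1 : ((h : G) : GL (Fin 2) ℚ) = 1 := Units.ext hMg1
      exact Subtype.ext (Subtype.ext h1)
    haveI : IsCyclic f.ker := isCyclic_of_subgroup_isDomain ψ hinj
    obtain ⟨x, hx⟩ := IsCyclic.exists_generator (α := f.ker)
    have hcard : Nat.card f.ker = orderOf x :=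
      (orderOf_eq_card_of_forall_mem_zpowers hx).symm
    set z : ℂˣ := ψ.toHomUnits x with hz
    have hzval : (z : ℂ) = ψ x := rfl
    have hinjU : Function.Injective ψ.toHomUnits := by
      intro s t hst
      apply hinj
      have := congrArg Units.val hst
      simpa using this
    have horder : orderOf z = orderOf x := orderOf_injective ψ.toHomUnits hinjU x
    have hzpos : 0 < orderOf z := by rw [horder]; exact orderOf_pos x
    have hn : ((p x : ℚ) : ℂ)^2
        + ((q x : ℚ) : ℂ)^2 * (((A 0 0 : ℚ) : ℂ) * ((A 1 1 : ℚ) : ℂ) - ((A 0 1 : ℚ) : ℂ)^2)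
        = 1 := by exact_mod_cast hnorm x
    have hquad : (z:ℂ)^2 - ((2 * p x : ℚ):ℂ)*(z:ℂ) + 1 = 0 := by
      rw [hzval, hψapp]
      push_cast
      linear_combination ((q x : ℂ)^2 * Complex.I^2) * hδ2'
        + ((q x : ℂ)^2 * (((A 0 0 : ℚ) : ℂ) * ((A 1 1 : ℚ) : ℂ) - ((A 0 1 : ℚ) : ℂ)^2)) * Complex.I_sq
        - hn
    have ht : |2 * p x| ≤ 2 := by
      have h1 := hnorm x
      rw [abs_le]
      constructor <;> nlinarith [hDpos, sq_nonneg (q x), sq_nonneg (p x + 1), sq_nonneg (p x - 1)]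
    have hfin := order_le_six_aux z (2 * p x) hzpos hquad ht
    rw [hcard, ← horder]
    exact hfin
  have hrange : Nat.card f.range ≤ 2 := by
    have hsub : (f.range : Set ℚˣ) ⊆ {1, -1} := by
      rintro y ⟨g, rfl⟩
      have hfin : orderOf g ≠ 0 := (orderOf_pos g).ne'
      have hy : (f g) ^ (orderOf g) = 1 := by
        rw [← map_pow, pow_orderOf_eq_one, _root_.map_one]
      have hyq : ((f g : ℚˣ) : ℚ) ^ (orderOf g) = 1 := by
        rw [← Units.val_pow_eq_pow_val, hy, Units.val_one]
      have habs : |((f g : ℚˣ) : ℚ)| = 1 := by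
        have h1 : |((f g : ℚˣ) : ℚ)| ^ (orderOf g) = 1 := by
          rw [← abs_pow, hyq, abs_one]
        by_contra hne
        rcases lt_or_gt_of_ne hne with hlt | hgt
        · have := pow_lt_one₀ (abs_nonneg _) hlt hfin
          rw [h1] at this; exact lt_irrefl _ this
        · have := one_lt_pow₀ hgt hfin
          rw [h1] at this; exact lt_irrefl _ this
      rcases abs_eq (by norm_num : (0:ℚ) ≤ 1) |>.mp habs with h | h
      · left; exact Units.ext h
      · right; exact Units.ext h
    calc Nat.card f.range = (f.range : Set ℚˣ).ncard := (Nat.card_coe_set_eq _).symm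
    _ ≤ ({1, -1} : Set ℚˣ).ncard := Set.ncard_le_ncard hsub (Set.toFinite _)
    _ ≤ 2 := le_trans (Set.ncard_insert_le _ _) (by simp)
  calc Nat.card G = Nat.card (G ⧸ f.ker) * Nat.card f.ker :=
        Subgroup.card_eq_card_quotient_mul_card_subgroup f.ker
  _ = Nat.card f.range * Nat.card f.ker :=
      by rw [Nat.card_congr (QuotientGroup.quotientKerEquivRange f).toEquiv]
  _ ≤ 2 * 6 := Nat.mul_le_mul hrange hker
  _ = 12 := rfl
end

section
/- Let $p > 2$ be a prime and $K$ a number field. Let $m_p = \sup\{n : \xi_{p^n} \in K(\xi_p)\}$ and $e_p = [K(\xi_p) : \mathbb{Q}(\xi_{p^{m_p}})]$. If $\xi_4 \in K$, then $m_2 \leq \nu_2(e_p) + 1$ (in particular $e_p$ is even), where $m_2 = \sup\{n : \xi_{2^n} \in K\}$. -/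
open IntermediateField

/-- The primitive `m`-th root of unity `e^{2πi/m}` in `ℂ`. -/
noncomputable def primRoot (m : ℕ) : ℂ := Complex.exp (2 * Real.pi * Complex.I / m)

lemma primRoot_isPrimitiveRoot {n : ℕ} (hn : n ≠ 0) : IsPrimitiveRoot (primRoot n) n :=
  Complex.isPrimitiveRoot_exp n hn

lemma primRoot_pow {m k : ℕ} (hm : m ≠ 0) (hk : k ≠ 0) :
    primRoot (m * k) ^ k = primRoot m := by
  unfold primRoot
  rw [← Complex.exp_nat_mul]
  congr 1
  have hm' : (m : ℂ) ≠ 0 := Nat.cast_ne_zero.mpr hm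
  have hk' : (k : ℂ) ≠ 0 := Nat.cast_ne_zero.mpr hk
  push_cast
  field_simp

lemma finrank_adjoin_primRoot {n : ℕ} (hn : n ≠ 0) :
    Module.finrank ℚ ℚ⟮primRoot n⟯ = n.totient := by
  have hprim := primRoot_isPrimitiveRoot hn
  have hint : IsIntegral ℚ (primRoot n) := (hprim.isIntegral (Nat.pos_of_ne_zero hn)).tower_top
  rw [IntermediateField.adjoin.finrank hint,
    ← Polynomial.cyclotomic_eq_minpoly_rat hprim (Nat.pos_of_ne_zero hn),
    Polynomial.natDegree_cyclotomic]

/-- Let `p > 2` be prime and `K` a number field (inside `ℂ`). With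
`m_p = sup {n : ξ_{p^n} ∈ K(ξ_p)}` and `e_p = [K(ξ_p) : ℚ(ξ_{p^{m_p}})]`:
if `ξ₄ ∈ K`, then `e_p` is even and `m₂ ≤ ν₂(e_p) + 1`, where
`m₂ = sup {n : ξ_{2^n} ∈ K}`. -/
theorem m2_le_of_xi4_mem (K : IntermediateField ℚ ℂ) [FiniteDimensional ℚ K]
    (p : ℕ) (hp : p.Prime) (hp2 : 2 < p)
    (mp : ℕ) (hmp : IsGreatest {n : ℕ | primRoot (p ^ n) ∈ K ⊔ ℚ⟮primRoot p⟯} mp)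
    (ep : ℕ) (hep : ep = IntermediateField.relfinrank ℚ⟮primRoot (p ^ mp)⟯ (K ⊔ ℚ⟮primRoot p⟯))
    (m2 : ℕ) (hm2 : IsGreatest {n : ℕ | primRoot (2 ^ n) ∈ K} m2)
    (hξ4 : primRoot 4 ∈ K) :
    2 ∣ ep ∧ m2 ≤ ep.factorization 2 + 1 := by
  set L := K ⊔ ℚ⟮primRoot p⟯ with hLdef
  set F := ℚ⟮primRoot (p ^ mp)⟯ with hFdef
  have hpne : p ≠ 0 := hp.ne_zero
  have hpmp : p ^ mp ≠ 0 := pow_ne_zero _ hpne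
  have h2m2 : (2 : ℕ) ^ m2 ≠ 0 := pow_ne_zero _ two_ne_zero
  -- m2 ≥ 2
  have hm22 : 2 ≤ m2 := hm2.2 (by show primRoot (2 ^ 2) ∈ K; norm_num; exact hξ4)
  -- membership facts
  have hζpL : primRoot (p ^ mp) ∈ L := hmp.1
  have hζ2L : primRoot (2 ^ m2) ∈ L := (le_sup_left : K ≤ L) hm2.1
  set N := p ^ mp * 2 ^ m2 with hNdef
  have hNne : N ≠ 0 := mul_ne_zero hpmp h2m2
  have hpowp : primRoot N ^ (2 ^ m2) = primRoot (p ^ mp) := primRoot_pow hpmp h2m2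
  have hpow2 : primRoot N ^ (p ^ mp) = primRoot (2 ^ m2) := by
    have := primRoot_pow h2m2 hpmp
    rwa [mul_comm] at this
  -- coprimality and Bezout
  have hcop : Nat.Coprime (p ^ mp) (2 ^ m2) :=
    Nat.Coprime.pow mp m2 ((Nat.coprime_primes hp Nat.prime_two).mpr (by omega))
  obtain ⟨u, v, huv⟩ : IsCoprime ((p ^ mp : ℕ) : ℤ) ((2 ^ m2 : ℕ) : ℤ) :=
    Nat.isCoprime_iff_coprime.mpr hcop
  have hNexpr : primRoot N = primRoot (2 ^ m2) ^ u * primRoot (p ^ mp) ^ v := by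
    have hne : primRoot N ≠ 0 := Complex.exp_ne_zero _
    calc primRoot N = primRoot N ^ (u * ((p ^ mp : ℕ) : ℤ) + v * ((2 ^ m2 : ℕ) : ℤ)) := by
          rw [huv, zpow_one]
      _ = (primRoot N ^ ((p ^ mp : ℕ) : ℤ)) ^ u * (primRoot N ^ ((2 ^ m2 : ℕ) : ℤ)) ^ v := by
          rw [zpow_add₀ hne, mul_comm u, mul_comm v, zpow_mul, zpow_mul]
      _ = primRoot (2 ^ m2) ^ u * primRoot (p ^ mp) ^ v := by
          rw [zpow_natCast, zpow_natCast, hpow2, hpowp]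
  -- the tower F ≤ F' ≤ L
  set F' := ℚ⟮primRoot N⟯ with hF'def
  have hFF' : F ≤ F' := by
    rw [hFdef, adjoin_simple_le_iff, ← hpowp]
    exact pow_mem (mem_adjoin_simple_self ℚ (primRoot N)) _
  have hF'L : F' ≤ L := by
    rw [hF'def, adjoin_simple_le_iff, hNexpr]
    exact mul_mem (zpow_mem hζ2L u) (zpow_mem hζpL v)
  have hFL : F ≤ L := hFF'.trans hF'L
  -- finite dimensionality of L over ℚ
  have hintp : IsIntegral ℚ (primRoot p) :=
    ((primRoot_isPrimitiveRoot hpne).isIntegral hp.pos).tower_top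
  haveI : FiniteDimensional ℚ ℚ⟮primRoot p⟯ := IntermediateField.adjoin.finiteDimensional hintp
  haveI : FiniteDimensional ℚ L := by
    rw [hLdef]; exact IntermediateField.finiteDimensional_sup K ℚ⟮primRoot p⟯
  -- degree computations
  have hdF : Module.finrank ℚ F = (p ^ mp).totient := finrank_adjoin_primRoot hpmp
  have hdF' : Module.finrank ℚ F' = (p ^ mp).totient * (2 ^ m2).totient := by
    rw [hF'def, finrank_adjoin_primRoot hNne, Nat.totient_mul hcop]
  have hr1 : relfinrank F F' = (2 ^ m2).totient := by
    have h := finrank_bot_mul_relfinrank hFF'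
    rw [hdF] at h
    rw [hdF'] at h
    exact Nat.eq_of_mul_eq_mul_left (Nat.totient_pos.mpr (Nat.pos_of_ne_zero hpmp)) h
  have htot2 : (2 ^ m2).totient = 2 ^ (m2 - 1) := by
    rw [Nat.totient_prime_pow Nat.prime_two (by omega)]; norm_num
  have hmul : relfinrank F F' * relfinrank F' L = ep := by
    rw [hep]; exact relfinrank_mul_relfinrank hFF' hF'L
  have hdvd : 2 ^ (m2 - 1) ∣ ep := by
    rw [← hmul, hr1, htot2]; exact Dvd.intro _ rfl
  have hepne : ep ≠ 0 := by
    have h := finrank_bot_mul_relfinrank hFL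
    rw [← hep] at h
    intro h0
    rw [h0, mul_zero] at h
    exact (Module.finrank_pos (R := ℚ) (M := L)).ne' h.symm
  have hfac : m2 - 1 ≤ ep.factorization 2 :=
    (Nat.Prime.pow_dvd_iff_le_factorization Nat.prime_two hepne).mp hdvd
  constructor
  · exact dvd_trans (dvd_pow_self 2 (by omega : m2 - 1 ≠ 0)) hdvd
  · omega
end

section
/- Let $K$ be a number field of degree $d$ and $p \geq 3$ a prime. Set $t_p = [K(\xi_p) : K]$ and $m_p = \sup\{n : \xi_{p^n} \in K(\xi_p)\}$. Then for every positive integer $n$, $$m_p \left\lfloor \frac{n}{t_p} \right\rfloor \leq (\nu_p(d) + 1)\left\lfloor \frac{n}{(p-1)/\gcd(p-1,d)} \right\rfloor.$$ -/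
open IntermediateField

lemma primRoot_isPrimitiveRoot_s14 {m : ℕ} (hm : m ≠ 0) : IsPrimitiveRoot (primRoot m) m := by
  simpa [primRoot] using Complex.isPrimitiveRoot_exp m hm

/-- Arithmetic core of the proof. -/
lemma arith_core (p d tp mp : ℕ) (hp : p.Prime) (hp3 : 3 ≤ p) (hd : d ≠ 0) (htp : tp ≠ 0)
    (hmp : 1 ≤ mp) (hdvd : p ^ (mp - 1) * (p - 1) ∣ d * tp) :
    ∀ n : ℕ, mp * (n / tp) ≤ (d.factorization p + 1) * (n / ((p - 1) / Nat.gcd (p - 1) d)) := by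
  intro n
  set v := d.factorization p with hv
  set g := Nat.gcd (p - 1) d with hg
  set q := (p - 1) / g with hq
  set k := mp - 1 - v with hk
  have hp1pos : 0 < p - 1 := by omega
  have hgdvd : g ∣ p - 1 := Nat.gcd_dvd_left _ _
  have hgpos : 0 < g := Nat.gcd_pos_of_pos_left _ hp1pos
  have hqpos : 0 < q := Nat.div_pos (Nat.le_of_dvd hp1pos hgdvd) hgpos
  -- q ∣ tp
  have hqdvd : q ∣ tp := by
    have h1 : p - 1 ∣ d * tp := dvd_trans (Dvd.intro_left _ rfl) hdvd
    have hgq : g * q = p - 1 := Nat.mul_div_cancel' hgdvd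
    have hgd : g * (d / g) = d := Nat.mul_div_cancel' (Nat.gcd_dvd_right _ _)
    have hcop : Nat.Coprime q (d / g) := Nat.coprime_div_gcd_div_gcd hgpos
    have h2 : q ∣ (d / g) * tp := by
      have : g * q ∣ g * ((d / g) * tp) := by
        rw [hgq, ← mul_assoc, hgd]; exact h1
      exact (mul_dvd_mul_iff_left hgpos.ne').mp this
    exact hcop.dvd_of_dvd_mul_left h2
  -- p ^ k ∣ tp
  have hpk : p ^ k ∣ tp := by
    have h1 : p ^ (mp - 1) ∣ d * tp := dvd_trans (Dvd.intro _ rfl) hdvd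
    have h2 : mp - 1 ≤ (d * tp).factorization p :=
      (Nat.Prime.pow_dvd_iff_le_factorization hp (by positivity)).mp h1
    rw [Nat.factorization_mul hd htp] at h2
    have h3 : k ≤ tp.factorization p := by
      simp only [Finsupp.coe_add, Pi.add_apply] at h2
      omega
    exact (Nat.Prime.pow_dvd_iff_le_factorization hp htp).mpr h3
  have hcopqp : Nat.Coprime q (p ^ k) := by
    have h1 : Nat.Coprime (p - 1) p := by
      have h0 : Nat.Coprime (p - 1) ((p - 1) + 1) := by
        simp [Nat.Coprime, Nat.gcd_self_add_right]
      rwa [Nat.sub_add_cancel (by omega : 1 ≤ p)] at h0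
    exact (Nat.Coprime.coprime_dvd_left (Nat.div_dvd_of_dvd hgdvd) h1).pow_right k
  have hmuldvd : q * p ^ k ∣ tp := hcopqp.mul_dvd_of_dvd_of_dvd hqdvd hpk
  have hle : q * p ^ k ≤ tp := Nat.le_of_dvd (Nat.pos_of_ne_zero htp) hmuldvd
  have hA : n / tp ≤ n / q / p ^ k := by
    rw [Nat.div_div_eq_div_mul]
    exact Nat.div_le_div_left hle (Nat.mul_pos hqpos (pow_pos hp.pos k))
  have hmple : mp ≤ (v + 1) * p ^ k := by
    have h1 : mp ≤ v + 1 + k := by omega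
    have h2 : k + 1 ≤ p ^ k := by
      have := Nat.lt_pow_self (n := k) (show 1 < p by omega)
      omega
    calc mp ≤ v + 1 + k := h1
      _ ≤ (v + 1) * (k + 1) := by nlinarith
      _ ≤ (v + 1) * p ^ k := Nat.mul_le_mul_left _ h2
  calc mp * (n / tp) ≤ ((v + 1) * p ^ k) * (n / q / p ^ k) :=
        Nat.mul_le_mul hmple hA
    _ = (v + 1) * (n / q / p ^ k * p ^ k) := by ring
    _ ≤ (v + 1) * (n / q) := Nat.mul_le_mul_left _ (Nat.div_mul_le_self _ _)

/-- Let `K` be a number field of degree `d` (inside `ℂ`) and `p ≥ 3` a prime. With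
`t_p = [K(ξ_p) : K]` and `m_p = sup {n : ξ_{p^n} ∈ K(ξ_p)}`, for every positive `n`
one has `m_p ⌊n / t_p⌋ ≤ (ν_p(d) + 1) ⌊n / ((p-1)/gcd(p-1,d))⌋`. -/
theorem mp_floor_bound (K : IntermediateField ℚ ℂ) [FiniteDimensional ℚ K]
    (d : ℕ) (hd : d = Module.finrank ℚ K)
    (p : ℕ) (hp : p.Prime) (hp3 : 3 ≤ p)
    (tp : ℕ) (htp : tp = IntermediateField.relfinrank K (K ⊔ ℚ⟮primRoot p⟯))
    (mp : ℕ) (hmp : IsGreatest {n : ℕ | primRoot (p ^ n) ∈ K ⊔ ℚ⟮primRoot p⟯} mp) :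
    ∀ n : ℕ, 0 < n →
      mp * (n / tp) ≤ (d.factorization p + 1) * (n / ((p - 1) / Nat.gcd (p - 1) d)) := by
  intro n hn
  have hζp : IsPrimitiveRoot (primRoot p) p := primRoot_isPrimitiveRoot_s14 hp.ne_zero
  have hint : IsIntegral ℚ (primRoot p) := (hζp.isIntegral hp.pos).tower_top
  haveI : FiniteDimensional ℚ ℚ⟮primRoot p⟯ := adjoin.finiteDimensional hint
  set L := K ⊔ ℚ⟮primRoot p⟯ with hL
  haveI : FiniteDimensional ℚ L := IntermediateField.finiteDimensional_sup _ _
  -- mp ≥ 1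
  have hmp1 : 1 ≤ mp := by
    apply hmp.2
    show primRoot (p ^ 1) ∈ L
    rw [pow_one]
    exact le_sup_right (α := IntermediateField ℚ ℂ) (mem_adjoin_simple_self ℚ _)
  -- degree of L over ℚ
  have hdL : Module.finrank ℚ L = d * tp := by
    rw [hd, htp, ← finrank_bot_mul_relfinrank (le_sup_left : K ≤ L)]
  -- cyclotomic subfield
  have hpm : p ^ mp ≠ 0 := pow_ne_zero _ hp.ne_zero
  have hζ : IsPrimitiveRoot (primRoot (p ^ mp)) (p ^ mp) := primRoot_isPrimitiveRoot_s14 hpm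
  have hintm : IsIntegral ℚ (primRoot (p ^ mp)) := (hζ.isIntegral (Nat.pos_of_ne_zero hpm)).tower_top
  have hsub : ℚ⟮primRoot (p ^ mp)⟯ ≤ L := by
    rw [adjoin_simple_le_iff]
    exact hmp.1
  have hfr : Module.finrank ℚ ℚ⟮primRoot (p ^ mp)⟯ = (p ^ mp).totient := by
    rw [IntermediateField.adjoin.finrank hintm,
      ← Polynomial.cyclotomic_eq_minpoly_rat hζ (Nat.pos_of_ne_zero hpm),
      Polynomial.natDegree_cyclotomic]
  have hdvd : (p ^ mp).totient ∣ d * tp := by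
    rw [← hdL, ← hfr]
    exact ⟨_, (finrank_bot_mul_relfinrank hsub).symm⟩
  have htot : (p ^ mp).totient = p ^ (mp - 1) * (p - 1) := Nat.totient_prime_pow hp hmp1
  rw [htot] at hdvd
  have hd0 : d ≠ 0 := by
    rw [hd]; exact (Module.finrank_pos (R := ℚ) (M := K)).ne'
  have htp0 : tp ≠ 0 := by
    intro h
    have := hdL
    rw [h, mul_zero] at this
    exact (Module.finrank_pos (R := ℚ) (M := L)).ne' this
  exact arith_core p d tp mp hp hp3 hd0 htp0 hmp1 hdvd n
end
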